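/- Let 0 ≤ α_l < α_h ≤ 1 and δ_l = α_l/(α_l+α_h). Then the intersection over all δ with δ_l < δ ≤ 1 of the sets 𝔻_p(δ) = {r : δ·Q_h(r) ≥ (1-δ)·Q_l(r)} equals {r : N(r) = 0}. Moreover, at δ = δ_l itself, 𝔻_p(δ_l) = {r : δ_l·Q_h(r) ≥ (1-δ_l)·Q_l(r)} = {r : N(r) = 0}. -/

import Mathlib

open Set

/-- For `0 ≤ α_l < α_h ≤ 1` and `δ_l = α_l/(α_l+α_h)`, the intersection over
all `δ ∈ (δ_l, 1]` of the sets `𝔻_p(δ) = {r : δ·Q_h(r) ≥ (1-δ)·Q_l(r)}` equals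
`{r : N(r) = 0}`; moreover `𝔻_p(δ_l) = {r : N(r) = 0}` as well. -/
theorem stmt_9 {m : ℕ} (N P : (Fin m → ℝ) → ℝ)
    (hNmeas : Measurable N) (hPmeas : Measurable P)
    (hNnonneg : ∀ r, 0 ≤ N r) (hPnonneg : ∀ r, 0 ≤ P r)
    (αl αh : ℝ) (hαl : 0 ≤ αl) (hlh : αl < αh) (hαh : αh ≤ 1)
    (Ql Qh : (Fin m → ℝ) → ℝ)
    (hQl : ∀ r, Ql r = αl * P r + (1 - αl) * N r)
    (hQh : ∀ r, Qh r = αh * P r + (1 - αh) * N r) :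
    (⋂ δ ∈ Set.Ioc (αl / (αl + αh)) (1 : ℝ),
        {r : Fin m → ℝ | δ * Qh r ≥ (1 - δ) * Ql r})
      = {r : Fin m → ℝ | N r = 0}
    ∧ {r : Fin m → ℝ | (αl / (αl + αh)) * Qh r ≥ (1 - αl / (αl + αh)) * Ql r}
      = {r : Fin m → ℝ | N r = 0} := by
  have hs : 0 < αl + αh := by linarith
  set δl : ℝ := αl / (αl + αh) with hδl
  have hδl1 : δl < 1 := by
    rw [hδl, div_lt_one hs]; linarith
  have hδl0 : 0 ≤ δl := div_nonneg hαl hs.le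
  -- key equivalence at δl
  have key : ∀ r : Fin m → ℝ, (δl * Qh r ≥ (1 - δl) * Ql r) ↔ N r = 0 := by
    intro r
    have hNr := hNnonneg r
    have hPr := hPnonneg r
    constructor
    · intro h
      have h2 : (αl + αh) * (δl * Qh r) ≥ (αl + αh) * ((1 - δl) * Ql r) := by
        exact mul_le_mul_of_nonneg_left h hs.le
      have e1 : (αl + αh) * (δl * Qh r) = αl * Qh r := by
        rw [hδl]; field_simp
      have e2 : (αl + αh) * ((1 - δl) * Ql r) = αh * Ql r := by
        rw [hδl]; field_simp; ring
      rw [e1, e2] at h2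
      have h3 : (αl - αh) * N r ≥ 0 := by
        have := hQl r; have := hQh r; nlinarith [hQl r, hQh r]
      nlinarith
    · intro h
      rw [hQl r, hQh r, h]
      have : δl * (αh * P r) = (1 - δl) * (αl * P r) := by
        rw [hδl]; field_simp; ring
      nlinarith [this]
  constructor
  · ext r
    have hNr := hNnonneg r
    have hPr := hPnonneg r
    simp only [Set.mem_iInter, Set.mem_setOf_eq, Set.mem_Ioc]
    constructor
    · intro h
      -- show the inequality holds at δl by approximation
      rw [← key r]
      by_contra hneg
      push_neg at hneg
      set c : ℝ := Qh r + Ql r with hc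
      have hcnn : 0 ≤ c := by
        rw [hc, hQl r, hQh r]; nlinarith
      set f0 : ℝ := δl * Qh r - (1 - δl) * Ql r with hf0
      have hf0neg : f0 < 0 := by rw [hf0]; linarith
      rcases eq_or_lt_of_le hcnn with hc0 | hcpos
      · -- c = 0 forces Ql r = Qh r = 0
        have hQl0 : Ql r = 0 := by
          have h1 : 0 ≤ Ql r := by rw [hQl r]; nlinarith
          have h2 : 0 ≤ Qh r := by rw [hQh r]; nlinarith
          nlinarith [hc0.symm]
        have hQh0 : Qh r = 0 := by nlinarith [hc0.symm]
        rw [hf0, hQl0, hQh0] at hf0neg; simp at hf0neg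
      · set ε : ℝ := min ((-f0) / (2 * c)) (1 - δl) with hε
        have hεpos : 0 < ε := by
          apply lt_min
          · have h0 : 0 < -f0 := by linarith
            positivity
          · linarith
        have hδmem : δl + ε ∈ Set.Ioc δl (1 : ℝ) := by
          constructor
          · linarith
          · have : ε ≤ 1 - δl := min_le_right _ _
            linarith
        have hineq := h (δl + ε) hδmem
        have hεc : ε * c ≤ -f0 / 2 := by
          have h1 : ε ≤ (-f0) / (2 * c) := min_le_left _ _
          calc ε * c ≤ ((-f0) / (2 * c)) * c := by nlinarith
            _ = -f0 / 2 := by field_simp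
        have : (δl + ε) * Qh r - (1 - (δl + ε)) * Ql r = f0 + ε * c := by
          rw [hf0, hc]; ring
        nlinarith
    · intro h δ hδ
      obtain ⟨hδ1, hδ2⟩ := hδ
      have hδs : αl < δ * (αl + αh) := by
        rw [hδl, div_lt_iff₀ hs] at hδ1; linarith
      rw [hQl r, hQh r, h]
      nlinarith
  · ext r
    simpa using key r
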